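/- Let A be an integer matrix and let B₀ be the set of square-free (entries in {-1,0,1}) elements of the Graver basis of A. Then for any two zero-one vectors x, y with Ax = Ay, there exist z₁,…,z_K ∈ ±B₀ such that y = x + z₁ + ⋯ + z_K and every partial sum x + z₁ + ⋯ + z_k (1 ≤ k ≤ K) is a zero-one vector. -/

import Mathlib

/-- zero-one vector -/
def zeroOne {n : ℕ} (x : Fin n → ℤ) : Prop := ∀ i, x i = 0 ∨ x i = 1

/-- square-free vector: all entries in {-1,0,1} -/
def sqFree {n : ℕ} (z : Fin n → ℤ) : Prop := ∀ i, z i = -1 ∨ z i = 0 ∨ z i = 1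

/-- a move for the configuration A -/
def isMove {m n : ℕ} (A : Matrix (Fin m) (Fin n) ℤ) (z : Fin n → ℤ) : Prop := A.mulVec z = 0

/-- no sign cancellation in any coordinate -/
def conformal {n : ℕ} (z₁ z₂ : Fin n → ℤ) : Prop := ∀ i, 0 ≤ z₁ i * z₂ i

/-- primitive move: not a conformal sum of two nonzero moves (an element of the Graver basis) -/
def primitive {m n : ℕ} (A : Matrix (Fin m) (Fin n) ℤ) (z : Fin n → ℤ) : Prop :=
  isMove A z ∧ z ≠ 0 ∧
    ¬ ∃ z₁ z₂ : Fin n → ℤ, isMove A z₁ ∧ isMove A z₂ ∧ z₁ ≠ 0 ∧ z₂ ≠ 0 ∧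
        conformal z₁ z₂ ∧ z = z₁ + z₂

/-- g is conformally below z -/
def below {n : ℕ} (g z : Fin n → ℤ) : Prop :=
  ∀ i, 0 ≤ g i * z i ∧ (g i).natAbs ≤ (z i).natAbs

lemma samesign (a b : ℤ) (h : 0 ≤ a * b) :
    (a+b).natAbs = a.natAbs + b.natAbs ∧ 0 ≤ a * (a+b) := by
  rcases le_or_gt 0 a with ha | ha <;> rcases le_or_gt 0 b with hb | hb
  · exact ⟨by omega, by nlinarith⟩
  · have : a = 0 := by nlinarith
    subst this; simp
  · have : b = 0 := by nlinarith
    subst this; exact ⟨by simp, by simpa using mul_self_nonneg a⟩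
  · exact ⟨by omega, by nlinarith⟩

lemma below_trans {n : ℕ} {g z₁ z : Fin n → ℤ} (h1 : below g z₁) (h2 : below z₁ z) :
    below g z := by
  intro i
  obtain ⟨ha, hb⟩ := h1 i
  obtain ⟨hc, hd⟩ := h2 i
  refine ⟨?_, le_trans hb hd⟩
  by_cases hz : z₁ i = 0
  · have : g i = 0 := by rw [hz] at hb; omega
    simp [this]
  · nlinarith [mul_nonneg ha hc, mul_self_pos.mpr hz]

lemma Iic_succ_sum (K : ℕ) {M : Type} [AddCommMonoid M] (f : Fin (K+1) → M) (j : Fin K) :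
    ∑ i ∈ Finset.Iic j.succ, f i = f 0 + ∑ i ∈ Finset.Iic j, f i.succ := by
  have h : Finset.Iic j.succ = insert 0 ((Finset.Iic j).map ⟨Fin.succ, Fin.succ_injective K⟩) := by
    ext i
    simp only [Finset.mem_Iic, Finset.mem_insert, Finset.mem_map, Function.Embedding.coeFn_mk]
    induction i using Fin.cases with
    | zero => simp
    | succ i' => simp [Fin.succ_le_succ_iff, Fin.succ_ne_zero, Fin.succ_inj]
  rw [h, Finset.sum_insert (by simp), Finset.sum_map]
  rfl

lemma Iic_zero_sum (K : ℕ) {M : Type} [AddCommMonoid M] (f : Fin (K+1) → M) :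
    ∑ i ∈ Finset.Iic (0 : Fin (K+1)), f i = f 0 := by
  have : Finset.Iic (0 : Fin (K+1)) = {0} := by
    ext i; simp [Fin.le_zero_iff]
  rw [this, Finset.sum_singleton]

/-- every nonzero move has a primitive move conformally below it -/
lemma exists_prim {m n : ℕ} (A : Matrix (Fin m) (Fin n) ℤ) :
    ∀ N (z : Fin n → ℤ), (∑ i, (z i).natAbs) ≤ N → isMove A z → z ≠ 0 →
      ∃ g, primitive A g ∧ below g z := by
  intro N
  induction N using Nat.strong_induction_on with
  | _ N ih =>
    intro z hN hm hz
    by_cases hp : primitive A z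
    · exact ⟨z, hp, fun i => ⟨mul_self_nonneg _, le_rfl⟩⟩
    · have hdec : ∃ z₁ z₂ : Fin n → ℤ, isMove A z₁ ∧ isMove A z₂ ∧ z₁ ≠ 0 ∧ z₂ ≠ 0 ∧
          conformal z₁ z₂ ∧ z = z₁ + z₂ := by
        by_contra hcon
        exact hp ⟨hm, hz, hcon⟩
      obtain ⟨z₁, z₂, h1, h2, hne1, hne2, hc, heq⟩ := hdec
      have key : ∀ i, (z i).natAbs = (z₁ i).natAbs + (z₂ i).natAbs ∧ 0 ≤ z₁ i * z i := by
        intro i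
        have := samesign (z₁ i) (z₂ i) (hc i)
        rw [heq]; exact this
      have hb1 : below z₁ z := fun i => ⟨(key i).2, by have := (key i).1; omega⟩
      have hpos : 0 < ∑ i, (z₂ i).natAbs := by
        obtain ⟨i, hi⟩ := Function.ne_iff.mp hne2
        have : (z₂ i).natAbs ≤ ∑ j, (z₂ j).natAbs :=
          Finset.single_le_sum (f := fun j => (z₂ j).natAbs) (fun j _ => Nat.zero_le _) (Finset.mem_univ i)
        simp only [Pi.zero_apply] at hi
        omega
      have hsum : ∑ i, (z i).natAbs = (∑ i, (z₁ i).natAbs) + ∑ i, (z₂ i).natAbs := by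
        rw [← Finset.sum_add_distrib]
        exact Finset.sum_congr rfl fun i _ => (key i).1
      have hlt : (∑ i, (z₁ i).natAbs) < N := by omega
      obtain ⟨g, hg, hgb⟩ := ih _ hlt z₁ le_rfl h1 hne1
      exact ⟨g, hg, below_trans hgb hb1⟩

lemma entry_cases {a g : ℤ} (ha : a = -1 ∨ a = 0 ∨ a = 1) (h1 : 0 ≤ g * a)
    (h2 : g.natAbs ≤ a.natAbs) : g = 0 ∨ g = a := by
  rcases ha with h | h | h <;> subst h <;> simp at h1 ⊢ <;> omega

lemma main_aux {m n : ℕ} (A : Matrix (Fin m) (Fin n) ℤ) (y : Fin n → ℤ) (hy : zeroOne y) :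
    ∀ N (x : Fin n → ℤ), zeroOne x → (∑ i, (y i - x i).natAbs) ≤ N →
      A.mulVec x = A.mulVec y →
    ∃ (K : ℕ) (z : Fin K → (Fin n → ℤ)),
      (∀ k, (primitive A (z k) ∧ sqFree (z k)) ∨ (primitive A (-(z k)) ∧ sqFree (-(z k)))) ∧
      y = x + ∑ k, z k ∧
      (∀ k : Fin K, zeroOne (x + ∑ j ∈ Finset.Iic k, z j)) := by
  intro N
  induction N using Nat.strong_induction_on with
  | _ N ih =>
    intro x hx hN hfib
    by_cases hxy : y = x
    · refine ⟨0, Fin.elim0, fun k => k.elim0, ?_, fun k => k.elim0⟩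
      simp [hxy]
    · have hne : y - x ≠ 0 := by
        intro h; exact hxy (by funext i; have := congrFun h i; simp at this; linarith)
      have hmv : isMove A (y - x) := by
        unfold isMove
        rw [Matrix.mulVec_sub, hfib, sub_self]
      obtain ⟨g, hg, hgb⟩ := exists_prim A _ (y - x) le_rfl hmv hne
      have hcase : ∀ i, g i = 0 ∨ g i = y i - x i := by
        intro i
        obtain ⟨h1, h2⟩ := hgb i
        simp only [Pi.sub_apply] at h1 h2
        refine entry_cases ?_ h1 h2
        rcases hx i with h | h <;> rcases hy i with h' | h' <;> simp [h, h'] <;> omega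
      have hsf : sqFree g := by
        intro i
        rcases hcase i with h | h <;> rcases hx i with h' | h' <;> rcases hy i with h'' | h'' <;>
          simp [h, h', h''] <;> omega
      have hz1 : zeroOne (x + g) := by
        intro i
        rcases hcase i with h | h <;> rcases hx i with h' | h' <;> rcases hy i with h'' | h'' <;>
          simp [h, h', h''] <;> omega
      have hfib' : A.mulVec (x + g) = A.mulVec y := by
        rw [Matrix.mulVec_add, hg.1, add_zero, hfib]
      have hlt : (∑ i, (y i - (x + g) i).natAbs) < N := by
        have hle : ∀ i, (y i - (x + g) i).natAbs ≤ (y i - x i).natAbs := by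
          intro i
          rcases hcase i with h | h <;> simp [h] <;> omega
        obtain ⟨i₀, hi₀⟩ := Function.ne_iff.mp hg.2.1
        simp only [Pi.zero_apply] at hi₀
        have hstrict : (y i₀ - (x + g) i₀).natAbs < (y i₀ - x i₀).natAbs := by
          rcases hcase i₀ with h | h
          · exact absurd h hi₀
          · simp [h]; omega
        have := Finset.sum_lt_sum (fun i _ => hle i) ⟨i₀, Finset.mem_univ i₀, hstrict⟩
        omega
      obtain ⟨K, w, hw1, hw2, hw3⟩ := ih _ hlt (x + g) hz1 le_rfl hfib'
      refine ⟨K + 1, Fin.cons g w, ?_, ?_, ?_⟩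
      · intro k
        induction k using Fin.cases with
        | zero => left; exact ⟨hg, hsf⟩
        | succ j => simpa [Fin.cons_succ] using hw1 j
      · rw [Fin.sum_cons, ← add_assoc]
        exact hw2
      · intro k
        induction k using Fin.cases with
        | zero =>
          rw [Iic_zero_sum]
          simpa [Fin.cons_zero] using hz1
        | succ j =>
          rw [Iic_succ_sum]
          simp only [Fin.cons_zero, Fin.cons_succ]
          rw [← add_assoc]
          exact hw3 j

theorem stmt0 {m n : ℕ} (A : Matrix (Fin m) (Fin n) ℤ)
    (x y : Fin n → ℤ) (hx : zeroOne x) (hy : zeroOne y)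
    (hfib : A.mulVec x = A.mulVec y) :
    ∃ (K : ℕ) (z : Fin K → (Fin n → ℤ)),
      (∀ k, (primitive A (z k) ∧ sqFree (z k)) ∨ (primitive A (-(z k)) ∧ sqFree (-(z k)))) ∧
      y = x + ∑ k, z k ∧
      (∀ k : Fin K, zeroOne (x + ∑ j ∈ Finset.Iic k, z j)) := by
  exact main_aux A y hy _ x hx le_rfl hfib
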